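/- Let K be a field complete for a non-archimedean valuation (not necessarily discrete). Every unit of the Robba ring R_K lies in the bounded subring R_K^bd, i.e., a Laurent series f = Σ a_i T^i that is invertible in R_K has bounded coefficients. -/

import Mathlib

open scoped NNReal ENNReal

/-!
STATEMENT 2: Every unit of the Robba ring `R_K` over a complete non-archimedean field `K`
lies in the bounded subring `R_K^bd`: if `f = Σ a_i T^i` is invertible in `R_K` then its
coefficients are bounded.

Laurent series are represented by their coefficient functions `ℤ → K`; invertibility of
`f` in `R_K` means that there is `g ∈ R_K` with `f·g = 1` (convolution product).
-/

/-- `f` converges on some annulus `ρ₀ ≤ |T| < 1` (i.e. `0 < v_K(T) ≤ r`): membership in `R_K`. -/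
def MemRobba {K : Type*} [NontriviallyNormedField K] (f : ℤ → K) : Prop :=
  ∃ ρ₀ ∈ Set.Ioo (0 : ℝ≥0) 1, ∀ ρ ∈ Set.Ico ρ₀ (1 : ℝ≥0),
    Filter.Tendsto (fun i : ℤ => (‖f i‖₊ * ρ ^ i : ℝ≥0)) Filter.cofinite (nhds 0)

/-- `h` is the product of the Laurent series `u` and `v`. -/
def IsLaurentMul {K : Type*} [NontriviallyNormedField K] (u v h : ℤ → K) : Prop :=
  ∀ i : ℤ, HasSum (fun j : ℤ => u j * v (i - j)) (h i)

/-- The Laurent series `1`. -/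
def laurentOne {K : Type*} [NontriviallyNormedField K] : ℤ → K :=
  fun i => if i = 0 then 1 else 0

open Filter

/-- A nonnegative function on `ℤ` tending to `0` along `cofinite`, not identically `0`,
attains a positive maximum at a *largest* index. -/
lemma aux_max_exists {a : ℤ → ℝ} (h0 : Tendsto a cofinite (nhds 0))
    (hnn : ∀ i, 0 ≤ a i) (hne : ∃ i, 0 < a i) :
    ∃ i₀, 0 < a i₀ ∧ (∀ j, a j ≤ a i₀) ∧ (∀ j, i₀ < j → a j < a i₀) := by
  obtain ⟨i₁, h₁⟩ := hne
  have hfin : {j | ¬ a j < a i₁}.Finite := by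
    have h2 := h0 (Iio_mem_nhds h₁)
    rw [Filter.mem_map, Filter.mem_cofinite] at h2
    have h3 : {j | ¬ a j < a i₁} = (a ⁻¹' Set.Iio (a i₁))ᶜ := by ext j; simp
    rw [h3]; exact h2

  classical
  set F := hfin.toFinset with hF
  have hi₁F : i₁ ∈ F := by simp [hF, Set.Finite.mem_toFinset]
  have hFne : F.Nonempty := ⟨i₁, hi₁F⟩
  set w := F.sup' hFne a with hw
  have hle : ∀ j, a j ≤ w := by
    intro j
    by_cases hj : j ∈ F
    · exact Finset.le_sup' a hj
    · have : a j < a i₁ := by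
        by_contra h
        exact hj (by simpa [hF, Set.Finite.mem_toFinset] using h)
      exact this.le.trans (Finset.le_sup' a hi₁F)
  have hwpos : 0 < w := lt_of_lt_of_le h₁ (Finset.le_sup' a hi₁F)
  -- the set of indices attaining w
  have hTfin : {j | a j = w}.Finite := by
    apply hfin.subset
    intro j hj
    simp only [Set.mem_setOf_eq] at hj ⊢
    rw [hj]
    exact not_lt.mpr (Finset.le_sup' a hi₁F)
  obtain ⟨iw, hiwF, hiw⟩ := F.exists_mem_eq_sup' hFne a
  have hTne : (hTfin.toFinset).Nonempty := ⟨iw, by simp [Set.Finite.mem_toFinset, hiw.symm, hw]⟩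
  set i₀ := hTfin.toFinset.max' hTne with hi₀
  have hi₀mem : a i₀ = w := by
    have := hTfin.toFinset.max'_mem hTne
    simpa [Set.Finite.mem_toFinset] using this
  refine ⟨i₀, by rwa [hi₀mem], fun j => hi₀mem ▸ hle j, fun j hj => ?_⟩
  rw [hi₀mem]
  rcases lt_or_eq_of_le (hle j) with h | h
  · exact h
  · exfalso
    have : j ∈ hTfin.toFinset := by simpa [Set.Finite.mem_toFinset] using h
    exact absurd (hTfin.toFinset.le_max' j this) (not_le.mpr hj)

/-- A function tending to `0` along cofinite which is everywhere `< ε` is uniformly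
bounded by some `c < ε`. -/
lemma aux_unif {v : ℤ → ℝ} (h0 : Tendsto v cofinite (nhds 0)) {ε : ℝ} (hε : 0 < ε)
    (h : ∀ j, v j < ε) : ∃ c, 0 ≤ c ∧ c < ε ∧ ∀ j, v j ≤ c := by
  have hfin : {j | ¬ v j < ε / 2}.Finite := by
    have h2 := h0 (Iio_mem_nhds (by linarith : (0:ℝ) < ε / 2))
    rw [Filter.mem_map, Filter.mem_cofinite] at h2
    have h3 : {j | ¬ v j < ε / 2} = (v ⁻¹' Set.Iio (ε / 2))ᶜ := by ext j; simp
    rw [h3]; exact h2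
  classical
  set F := hfin.toFinset with hF
  rcases F.eq_empty_or_nonempty with hFe | hFne
  · refine ⟨ε / 2, by linarith, by linarith, fun j => ?_⟩
    have : j ∉ F := by rw [hFe]; exact Finset.notMem_empty j
    have : v j < ε / 2 := by
      by_contra hc
      exact this (by simpa [hF, Set.Finite.mem_toFinset] using hc)
    linarith
  · refine ⟨max (F.sup' hFne v) (ε / 2), ?_, ?_, fun j => ?_⟩
    · exact le_trans (by linarith) (le_max_right _ _)
    · apply max_lt _ (by linarith)
      rw [Finset.sup'_lt_iff]
      exact fun j _ => h j
    · by_cases hj : j ∈ F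
      · exact le_trans (Finset.le_sup' v hj) (le_max_left _ _)
      · have : v j < ε / 2 := by
          by_contra hc
          exact hj (by simpa [hF, Set.Finite.mem_toFinset] using hc)
        exact le_trans this.le (le_max_right _ _)

/-- Key Gauss-norm multiplicativity consequence: if `f·g = 1` then for any radius `ρ`,
the product of any two weighted coefficient norms is at most `1`. -/
lemma gauss_key {K : Type*} [NontriviallyNormedField K] [IsUltrametricDist K]
    {f g : ℤ → K} (hfg : IsLaurentMul f g laurentOne)
    {ρ : ℝ} (hρ : 0 < ρ)
    (hF : Tendsto (fun i : ℤ => ‖f i‖ * ρ ^ i) cofinite (nhds 0))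
    (hG : Tendsto (fun i : ℤ => ‖g i‖ * ρ ^ i) cofinite (nhds 0)) :
    ∀ i j : ℤ, (‖f i‖ * ρ ^ i) * (‖g j‖ * ρ ^ j) ≤ 1 := by
  classical
  have hρ' : ρ ≠ 0 := ne_of_gt hρ
  set a : ℤ → ℝ := fun j => ‖f j‖ * ρ ^ j with ha
  set b : ℤ → ℝ := fun j => ‖g j‖ * ρ ^ j with hb
  have hann : ∀ j, 0 ≤ a j := fun j => mul_nonneg (norm_nonneg _) (zpow_pos hρ j).le
  have hbnn : ∀ j, 0 ≤ b j := fun j => mul_nonneg (norm_nonneg _) (zpow_pos hρ j).le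
  -- f and g are nonzero
  have hfne : ∃ i, 0 < a i := by
    by_contra hc
    push_neg at hc
    have hz : ∀ j, f j = 0 := by
      intro j
      have := hc j
      have h2 : a j = 0 := le_antisymm this (hann j)
      have : ‖f j‖ = 0 := by
        have := mul_eq_zero.mp h2
        rcases this with h | h
        · exact h
        · exact absurd h (ne_of_gt (zpow_pos hρ j))
      simpa using this
    have := hfg 0
    have h1 : HasSum (fun j : ℤ => f j * g (0 - j)) 0 := by
      have : (fun j : ℤ => f j * g (0 - j)) = fun _ => 0 := by
        funext j; rw [hz j, zero_mul]
      rw [this]; exact hasSum_zero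
    have : laurentOne (0:ℤ) = (0:K) := h1.unique (hfg 0) ▸ rfl
    have h2 : laurentOne (0:ℤ) = (1:K) := by simp [laurentOne]
    rw [h2] at this
    exact one_ne_zero this
  have hgne : ∃ i, 0 < b i := by
    by_contra hc
    push_neg at hc
    have hz : ∀ j, g j = 0 := by
      intro j
      have h2 : b j = 0 := le_antisymm (hc j) (hbnn j)
      have : ‖g j‖ = 0 := by
        rcases mul_eq_zero.mp h2 with h | h
        · exact h
        · exact absurd h (ne_of_gt (zpow_pos hρ j))
      simpa using this
    have h1 : HasSum (fun j : ℤ => f j * g (0 - j)) 0 := by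
      have : (fun j : ℤ => f j * g (0 - j)) = fun _ => 0 := by
        funext j; rw [hz _, mul_zero]
      rw [this]; exact hasSum_zero
    have : laurentOne (0:ℤ) = (0:K) := h1.unique (hfg 0) ▸ rfl
    have h2 : laurentOne (0:ℤ) = (1:K) := by simp [laurentOne]
    rw [h2] at this
    exact one_ne_zero this
  obtain ⟨i₀, hai₀pos, hamax, hastrict⟩ := aux_max_exists hF hann hfne
  obtain ⟨j₀, hbj₀pos, hbmax, hbstrict⟩ := aux_max_exists hG hbnn hgne
  set k := i₀ + j₀ with hk
  have hfi₀ : ‖f i₀‖ > 0 := by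
    rcases lt_or_ge 0 ‖f i₀‖ with h | h
    · exact h
    · exfalso
      have : ‖f i₀‖ = 0 := le_antisymm h (norm_nonneg _)
      have : a i₀ = 0 := by rw [ha]; simp [this]
      linarith [hai₀pos]
  have hgj₀ : ‖g j₀‖ > 0 := by
    rcases lt_or_ge 0 ‖g j₀‖ with h | h
    · exact h
    · exfalso
      have : ‖g j₀‖ = 0 := le_antisymm h (norm_nonneg _)
      have : b j₀ = 0 := by rw [hb]; simp [this]
      linarith [hbj₀pos]
  set t : K := f i₀ * g j₀ with htdef
  have htnorm : ‖t‖ * ρ ^ k = a i₀ * b j₀ := by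
    rw [htdef, norm_mul, ha, hb, hk, zpow_add₀ hρ']
    ring
  have htpos : 0 < ‖t‖ := by
    rw [htdef, norm_mul]
    exact mul_pos hfi₀ hgj₀
  set s : K := laurentOne k with hsdef
  have hS : HasSum (fun j : ℤ => f j * g (k - j)) s := hfg k
  -- the sum with the dominant term removed
  set u : ℤ → K := fun j => if j = i₀ then 0 else f j * g (k - j) with hu
  have hU : HasSum u (s - t) := by
    have h1 : HasSum (fun j : ℤ => if j = i₀ then t else 0) t := hasSum_ite_eq i₀ t
    have h2 := hS.sub h1
    have : (fun j : ℤ => f j * g (k - j) - if j = i₀ then t else 0) = u := by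
      funext j
      by_cases hj : j = i₀
      · rw [hj]
        simp [hu, htdef, show k - i₀ = j₀ by omega]
      · simp [hu, hj]
    rwa [this] at h2
  -- each term of u is strictly smaller than ‖t‖
  have hterm : ∀ j, ‖u j‖ < ‖t‖ := by
    intro j
    by_cases hj : j = i₀
    · simp only [hu, if_pos hj, norm_zero]; exact htpos
    · simp only [hu, if_neg hj]
      -- ‖f j * g (k - j)‖ * ρ^k = a j * b (k - j)
      have hnorm : ‖f j * g (k - j)‖ * ρ ^ k = a j * b (k - j) := by
        rw [norm_mul, ha, hb]
        have : ρ ^ j * ρ ^ (k - j) = ρ ^ k := by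
          rw [← zpow_add₀ hρ']; congr 1; omega
        calc ‖f j‖ * ‖g (k - j)‖ * ρ ^ k = ‖f j‖ * ‖g (k - j)‖ * (ρ ^ j * ρ ^ (k - j)) := by
              rw [this]
          _ = ‖f j‖ * ρ ^ j * (‖g (k - j)‖ * ρ ^ (k - j)) := by ring
      have hstrict : a j * b (k - j) < a i₀ * b j₀ := by
        rcases lt_or_gt_of_ne hj with h | h
        · -- j < i₀ so k - j > j₀
          have h1 : b (k - j) < b j₀ := hbstrict _ (by omega)
          have h2 : a j ≤ a i₀ := hamax j
          nlinarith [hann j, hbnn (k - j), hai₀pos, hbj₀pos]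
        · have h1 : a j < a i₀ := hastrict _ h
          have h2 : b (k - j) ≤ b j₀ := hbmax _
          nlinarith [hann j, hbnn (k - j), hai₀pos, hbj₀pos]
      have hρk : 0 < ρ ^ k := zpow_pos hρ k
      have := htnorm
      nlinarith [norm_nonneg (f j * g (k - j))]
  -- uniform strict bound
  have hutend : Tendsto (fun j => ‖u j‖) cofinite (nhds 0) := by
    have hb0 : Tendsto (fun j : ℤ => b (k - j)) cofinite (nhds 0) := by
      have hinj : Function.Injective (fun j : ℤ => k - j) := by
        intro x y hxy
        have hxy' : k - x = k - y := hxy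
        omega
      exact hG.comp hinj.tendsto_cofinite
    have hbound : ∀ j, ‖u j‖ ≤ (a i₀ * ρ ^ (-k)) * b (k - j) := by
      intro j
      by_cases hj : j = i₀
      · simp only [hu, if_pos hj, norm_zero]
        exact mul_nonneg (mul_nonneg (hann i₀) (zpow_pos hρ _).le) (hbnn _)
      · simp only [hu, if_neg hj]
        have hnorm : ‖f j * g (k - j)‖ * ρ ^ k = a j * b (k - j) := by
          rw [norm_mul, ha, hb]
          have : ρ ^ j * ρ ^ (k - j) = ρ ^ k := by
            rw [← zpow_add₀ hρ']; congr 1; omega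
          calc ‖f j‖ * ‖g (k - j)‖ * ρ ^ k = ‖f j‖ * ‖g (k - j)‖ * (ρ ^ j * ρ ^ (k - j)) := by
                rw [this]
            _ = ‖f j‖ * ρ ^ j * (‖g (k - j)‖ * ρ ^ (k - j)) := by ring
        have hρk : 0 < ρ ^ k := zpow_pos hρ k
        have hρmk : ρ ^ (-k) = (ρ ^ k)⁻¹ := zpow_neg ρ k
        have haj : a j ≤ a i₀ := hamax j
        have : ‖f j * g (k - j)‖ = a j * b (k - j) * (ρ ^ k)⁻¹ := by
          field_simp at hnorm ⊢
          linarith [hnorm]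
        rw [this, hρmk]
        have : a j * b (k - j) ≤ a i₀ * b (k - j) :=
          mul_le_mul_of_nonneg_right haj (hbnn _)
        calc a j * b (k - j) * (ρ ^ k)⁻¹ ≤ a i₀ * b (k - j) * (ρ ^ k)⁻¹ :=
              mul_le_mul_of_nonneg_right this (inv_nonneg.mpr hρk.le)
          _ = a i₀ * (ρ ^ k)⁻¹ * b (k - j) := by ring
    have hCpos : Tendsto (fun j : ℤ => (a i₀ * ρ ^ (-k)) * b (k - j)) cofinite (nhds 0) := by
      have := hb0.const_mul (a i₀ * ρ ^ (-k))
      simpa using this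
    exact squeeze_zero (fun j => norm_nonneg _) hbound hCpos
  obtain ⟨c, hc0, hcε, hcb⟩ := aux_unif hutend htpos hterm
  have hrbound : ‖s - t‖ ≤ c := by
    rw [← hU.tsum_eq]
    exact IsUltrametricDist.norm_tsum_le_of_forall_le_of_nonneg hc0 hcb
  -- ‖s‖ = ‖t‖
  have hseq : ‖s‖ = ‖t‖ := by
    have h1 : ‖s‖ ≤ ‖t‖ := by
      have : s = t + (s - t) := by ring
      rw [this]
      exact le_trans (IsUltrametricDist.norm_add_le_max _ _)
        (max_le le_rfl (le_trans hrbound hcε.le))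
    have h2 : ‖t‖ ≤ ‖s‖ := by
      have ht' : t = s + (-(s - t)) := by ring
      have := IsUltrametricDist.norm_add_le_max s (-(s - t))
      rw [← ht', norm_neg] at this
      rcases max_cases ‖s‖ ‖s - t‖ with ⟨he, _⟩ | ⟨he, _⟩
      · rwa [he] at this
      · exfalso
        rw [he] at this
        linarith [lt_of_le_of_lt hrbound hcε]
    linarith
  -- s ≠ 0, so k = 0 and ‖s‖ = 1
  have hsne : s ≠ 0 := by
    intro h
    rw [h, norm_zero] at hseq
    linarith
  have hk0 : k = 0 := by
    by_contra hkne
    exact hsne (by simp [hsdef, laurentOne, hkne])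
  have hs1 : ‖s‖ = 1 := by
    rw [hsdef, laurentOne, if_pos hk0]; simp
  have hkey : a i₀ * b j₀ = 1 := by
    rw [← htnorm, hk0]
    simp [← hseq, hs1]
  intro i j
  calc a i * b j ≤ a i₀ * b j₀ :=
        mul_le_mul (hamax i) (hbmax j) (hbnn j) (hann i₀)
    _ = 1 := hkey

theorem units_of_Robba_ring_are_bounded
    {K : Type*} [NontriviallyNormedField K] [IsUltrametricDist K] [CompleteSpace K]
    (f g : ℤ → K) (hf : MemRobba f) (hg : MemRobba g)
    (hfg : IsLaurentMul f g laurentOne) :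
    ∃ C : ℝ, ∀ i : ℤ, ‖f i‖ ≤ C := by
  classical
  obtain ⟨ρf, hρf, hfprop⟩ := hf
  obtain ⟨ρg, hρg, hgprop⟩ := hg
  set ρ₀ : ℝ≥0 := max ρf ρg with hρ₀
  have hρ₀pos : (0:ℝ≥0) < ρ₀ := lt_of_lt_of_le hρf.1 (le_max_left _ _)
  have hρ₀lt : ρ₀ < 1 := max_lt hρf.2 hρg.2
  -- g is not identically zero
  have hgne : ∃ i, g i ≠ 0 := by
    by_contra hc
    push_neg at hc
    have h1 : HasSum (fun j : ℤ => f j * g (0 - j)) 0 := by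
      have : (fun j : ℤ => f j * g (0 - j)) = fun _ => 0 := by
        funext j; rw [hc _, mul_zero]
      rw [this]; exact hasSum_zero
    have : laurentOne (0:ℤ) = (0:K) := h1.unique (hfg 0) ▸ rfl
    have h2 : laurentOne (0:ℤ) = (1:K) := by simp [laurentOne]
    rw [h2] at this
    exact one_ne_zero this
  obtain ⟨i₁, hi₁⟩ := hgne
  have hgi₁pos : 0 < ‖g i₁‖ := norm_pos_iff.mpr hi₁
  refine ⟨‖g i₁‖⁻¹, fun i => ?_⟩
  -- the bound for every radius ρ ∈ [ρ₀, 1)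
  have hbound : ∀ x : ℝ, x ∈ Set.Ico ((ρ₀:ℝ)) 1 →
      ‖f i‖ * ‖g i₁‖ ≤ x ^ (-(i + i₁)) := by
    intro x ⟨hx1, hx2⟩
    have hxpos : (0:ℝ) < x := lt_of_lt_of_le (by exact_mod_cast hρ₀pos) hx1
    set ρ : ℝ≥0 := ⟨x, hxpos.le⟩ with hρdef
    have hρmem : ρ ∈ Set.Ico ρ₀ (1:ℝ≥0) := by
      constructor
      · exact_mod_cast hx1
      · exact_mod_cast hx2
    have hρfmem : ρ ∈ Set.Ico ρf (1:ℝ≥0) :=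
      ⟨le_trans (le_max_left _ _) hρmem.1, hρmem.2⟩
    have hρgmem : ρ ∈ Set.Ico ρg (1:ℝ≥0) :=
      ⟨le_trans (le_max_right _ _) hρmem.1, hρmem.2⟩
    have hcoe : ∀ (h : ℤ → K), Filter.Tendsto (fun i : ℤ => (‖h i‖₊ * ρ ^ i : ℝ≥0))
        Filter.cofinite (nhds 0) →
        Tendsto (fun i : ℤ => ‖h i‖ * x ^ i) cofinite (nhds 0) := by
      intro h hh
      have := (NNReal.tendsto_coe (f := cofinite)
        (m := fun i : ℤ => (‖h i‖₊ * ρ ^ i : ℝ≥0)) (x := 0)).mpr hh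
      have heq : (fun i : ℤ => ((‖h i‖₊ * ρ ^ i : ℝ≥0) : ℝ)) =
          fun i : ℤ => ‖h i‖ * x ^ i := by
        funext j
        push_cast
        rfl
      rwa [heq, NNReal.coe_zero] at this
    have hFt := hcoe f (hfprop ρ hρfmem)
    have hGt := hcoe g (hgprop ρ hρgmem)
    have hkey := gauss_key hfg hxpos hFt hGt i i₁
    -- rearrange: ‖f i‖ * x^i * (‖g i₁‖ * x^{i₁}) ≤ 1
    have hxk : (0:ℝ) < x ^ (i + i₁) := zpow_pos hxpos _
    have hx' : x ≠ 0 := ne_of_gt hxpos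
    have hprod : ‖f i‖ * ‖g i₁‖ * x ^ (i + i₁) ≤ 1 := by
      have : ‖f i‖ * x ^ i * (‖g i₁‖ * x ^ i₁) = ‖f i‖ * ‖g i₁‖ * x ^ (i + i₁) := by
        rw [zpow_add₀ hx']; ring
      linarith [this ▸ hkey]
    rw [zpow_neg]
    calc ‖f i‖ * ‖g i₁‖ = ‖f i‖ * ‖g i₁‖ * x ^ (i + i₁) * (x ^ (i + i₁))⁻¹ := by
            field_simp
      _ ≤ 1 * (x ^ (i + i₁))⁻¹ :=
          mul_le_mul_of_nonneg_right hprod (inv_nonneg.mpr hxk.le)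
      _ = (x ^ (i + i₁))⁻¹ := one_mul _
  -- take the limit ρ → 1⁻
  have hlim : Tendsto (fun x : ℝ => x ^ (-(i + i₁))) (nhdsWithin 1 (Set.Iio 1)) (nhds 1) := by
    have hcont : ContinuousAt (fun x : ℝ => x ^ (-(i + i₁))) 1 :=
      continuousAt_zpow₀ 1 _ (Or.inl one_ne_zero)
    have := hcont.tendsto
    rw [one_zpow] at this
    exact this.mono_left nhdsWithin_le_nhds
  have hev : ∀ᶠ x in nhdsWithin (1:ℝ) (Set.Iio 1), ‖f i‖ * ‖g i₁‖ ≤ x ^ (-(i + i₁)) := by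
    filter_upwards [Ico_mem_nhdsLT (by exact_mod_cast hρ₀lt : (ρ₀:ℝ) < 1)] with x hx
    exact hbound x hx
  have hfinal : ‖f i‖ * ‖g i₁‖ ≤ 1 := ge_of_tendsto hlim hev
  calc ‖f i‖ = ‖f i‖ * ‖g i₁‖ * ‖g i₁‖⁻¹ := by field_simp
    _ ≤ 1 * ‖g i₁‖⁻¹ := mul_le_mul_of_nonneg_right hfinal (inv_nonneg.mpr hgi₁pos.le)
    _ = ‖g i₁‖⁻¹ := one_mul _
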